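/- (Fundamental Lemma, state-space version) Let (A,B,C,D) be a controllable and observable LTI system with state dimension n. Let u^d be an input of length T that is persistently exciting of order L + n, and let y^d be the corresponding output from some initial state. Then the column span of the depth-L Hankel matrix H_L(col(u^d, y^d)) equals the set of all length-L input/output trajectories of the system. In particular, for every input sequence u in R^{Lm} and every initial state x0 in R^n, there exists g such that H_L(u^d) g = u and H_L(y^d) g = O_L(A,C) x0 + T_L(A,B,C,D) u. -/

import Mathlib

open Matrix Finset

/-- Block Hankel matrix of depth `L` with `cols` columns from `u : ℕ → Fin m → ℝ`. -/
def hankel {m : ℕ} (u : ℕ → Fin m → ℝ) (L cols : ℕ) :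
    Matrix (Fin L × Fin m) (Fin cols) ℝ :=
  fun ia j => u ((ia.1 : ℕ) + (j : ℕ)) ia.2

/-- Extended observability matrix. -/
def obsMat {n p : ℕ} (A : Matrix (Fin n) (Fin n) ℝ) (C : Matrix (Fin p) (Fin n) ℝ)
    (L : ℕ) : Matrix (Fin L × Fin p) (Fin n) ℝ :=
  fun ip j => (C * A ^ (ip.1 : ℕ)) ip.2 j

/-- Controllability matrix `[B, AB, ..., A^{n-1} B]`. -/
def ctrbMat {n m : ℕ} (A : Matrix (Fin n) (Fin n) ℝ) (B : Matrix (Fin n) (Fin m) ℝ) :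
    Matrix (Fin n) (Fin n × Fin m) ℝ :=
  fun i km => (A ^ (km.1 : ℕ) * B) i km.2

section Helpers

lemma aux_vecMul_eq_zero {R C : Type*} [Fintype R] [Fintype C] (M : Matrix R C ℝ)
    (h : M.rank = Fintype.card R) (v : R → ℝ) (hv : v ᵥ* M = 0) : v = 0 := by
  have h1 : Mᵀ.rank = Fintype.card R := by rw [Matrix.rank_transpose]; exact h
  have h2 : LinearMap.ker Mᵀ.mulVecLin = ⊥ := by
    have h3 := Mᵀ.mulVecLin.finrank_range_add_finrank_ker
    rw [Matrix.rank] at h1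
    have hdom : Module.finrank ℝ (R → ℝ) = Fintype.card R := Module.finrank_fintype_fun_eq_card ℝ
    rw [hdom, h1] at h3
    have h4 : Module.finrank ℝ (LinearMap.ker Mᵀ.mulVecLin) = 0 := by omega
    exact Submodule.finrank_eq_zero.mp h4
  have h5 : Mᵀ.mulVecLin v = 0 := by
    rw [Matrix.mulVecLin_apply, Matrix.mulVec_transpose, hv]
  have hm : v ∈ LinearMap.ker Mᵀ.mulVecLin := LinearMap.mem_ker.mpr h5
  rw [h2] at hm
  simpa using hm

lemma aux_mulVec_surjective {R C : Type*} [Fintype R] [Fintype C] (M : Matrix R C ℝ)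
    (h : ∀ v : R → ℝ, v ᵥ* M = 0 → v = 0) : Function.Surjective M.mulVec := by
  have hker : LinearMap.ker Mᵀ.mulVecLin = ⊥ := by
    rw [LinearMap.ker_eq_bot']
    intro v hv
    exact h v (by rwa [Matrix.mulVecLin_apply, Matrix.mulVec_transpose] at hv)
  have h1 : Mᵀ.rank = Fintype.card R := by
    have h3 := Mᵀ.mulVecLin.finrank_range_add_finrank_ker
    rw [hker] at h3
    simp only [finrank_bot, add_zero] at h3
    rw [Matrix.rank, h3, Module.finrank_fintype_fun_eq_card]
  have h2 : M.rank = Fintype.card R := by rw [← Matrix.rank_transpose]; exact h1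
  have h3 : LinearMap.range M.mulVecLin = ⊤ := by
    apply Submodule.eq_top_of_finrank_eq
    rw [← Matrix.rank, h2, Module.finrank_fintype_fun_eq_card]
  intro b
  have hb : b ∈ LinearMap.range M.mulVecLin := h3 ▸ Submodule.mem_top
  obtain ⟨g, hg⟩ := hb
  exact ⟨g, hg⟩

lemma aux_mulVec_sum {a b : ℕ} {N : Type*} [Fintype N] (M : Matrix (Fin a) (Fin b) ℝ) (g : N → ℝ)
    (v : N → Fin b → ℝ) :
    M.mulVec (∑ j, g j • v j) = ∑ j, g j • M.mulVec (v j) := by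
  have h := map_sum M.mulVecLin (fun j => g j • v j) Finset.univ
  rw [Matrix.mulVecLin_apply] at h
  rw [h]
  apply Finset.sum_congr rfl
  intro j _
  rw [Matrix.mulVecLin_apply, Matrix.mulVec_smul]

lemma aux_dot_sum {n : ℕ} (ζ : Fin n → ℝ) (K : Finset ℕ) (w : ℕ → Fin n → ℝ) :
    ζ ⬝ᵥ (∑ k ∈ K, w k) = ∑ k ∈ K, ζ ⬝ᵥ w k := by
  simp only [dotProduct, Finset.sum_apply, Finset.mul_sum]
  exact Finset.sum_comm

lemma aux_state {n m : ℕ} (A : Matrix (Fin n) (Fin n) ℝ) (B : Matrix (Fin n) (Fin m) ℝ)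
    (x : ℕ → Fin n → ℝ) (ud : ℕ → Fin m → ℝ)
    (hx : ∀ t, x (t + 1) = A.mulVec (x t) + B.mulVec (ud t)) (k j : ℕ) :
    x (j + k) = (A ^ k).mulVec (x j)
      + ∑ s ∈ range k, (A ^ (k - 1 - s) * B).mulVec (ud (j + s)) := by
  induction k with
  | zero => simp
  | succ k ih =>
    have h1 : j + (k + 1) = (j + k) + 1 := by ring
    rw [h1, hx, ih, Matrix.mulVec_add, Matrix.mulVec_mulVec, ← pow_succ']
    have hsum : A.mulVec (∑ s ∈ range k, (A ^ (k - 1 - s) * B).mulVec (ud (j + s)))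
        = ∑ s ∈ range k, (A ^ (k + 1 - 1 - s) * B).mulVec (ud (j + s)) := by
      have h2 := map_sum A.mulVecLin
        (fun s => (A ^ (k - 1 - s) * B).mulVec (ud (j + s))) (range k)
      rw [Matrix.mulVecLin_apply] at h2
      rw [h2]
      apply Finset.sum_congr rfl
      intro s hs
      rw [Matrix.mulVecLin_apply, Matrix.mulVec_mulVec]
      have he : k + 1 - 1 - s = (k - 1 - s) + 1 := by
        have := Finset.mem_range.mp hs; omega
      rw [he]
      rw [pow_succ', Matrix.mul_assoc]
    rw [hsum, Finset.sum_range_succ]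
    have hB : A ^ (k + 1 - 1 - k) * B = B := by simp
    rw [hB]
    abel

lemma aux_sum_smul_mulVec {a b : ℕ} (K : Finset ℕ) (c : ℕ → ℝ)
    (M : ℕ → Matrix (Fin a) (Fin b) ℝ) (v : Fin b → ℝ) :
    (∑ k ∈ K, c k • M k).mulVec v = ∑ k ∈ K, c k • ((M k).mulVec v) := by
  induction K using Finset.induction_on with
  | empty => simp [Matrix.zero_mulVec]
  | insert a s hnm ih =>
    rw [Finset.sum_insert hnm, Finset.sum_insert hnm, Matrix.add_mulVec, ih,
      Matrix.smul_mulVec]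

end Helpers

lemma aux_core {n m T L : ℕ} (A : Matrix (Fin n) (Fin n) ℝ) (B : Matrix (Fin n) (Fin m) ℝ)
    (hctrb : (ctrbMat A B).rank = n)
    (x : ℕ → Fin n → ℝ) (ud : ℕ → Fin m → ℝ)
    (hx : ∀ t, x (t + 1) = A.mulVec (x t) + B.mulVec (ud t))
    (hpe : (hankel ud (L + n) (T - (L + n) + 1)).rank = (L + n) * m)
    (hLT : L + n ≤ T)
    (η : ℕ → Fin m → ℝ) (ζ : Fin n → ℝ)
    (hηL : ∀ t, L ≤ t → η t = 0)
    (hker : ∀ j, j ≤ T - L → (∑ t ∈ range L, η t ⬝ᵥ ud (j + t)) + ζ ⬝ᵥ x j = 0) :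
    (∀ t, η t = 0) ∧ ζ = 0 := by
  classical
  set c : ℕ → ℝ := fun k => A.charpoly.coeff k with hc
  have hcn : c n = 1 := by
    have h := (Matrix.charpoly_monic A).coeff_natDegree
    rwa [Matrix.charpoly_natDegree_eq_dim, Fintype.card_fin] at h
  have hCH : ∑ k ∈ range (n + 1), c k • A ^ k = 0 := by
    have h1 := Matrix.aeval_self_charpoly A
    rw [Polynomial.aeval_eq_sum_range, Matrix.charpoly_natDegree_eq_dim, Fintype.card_fin] at h1
    exact h1
  -- derived equation E_k
  have hE : ∀ k, k ≤ n → ∀ j, j + k ≤ T - L →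
      (∑ s ∈ range k, (ζ ᵥ* (A ^ (k - 1 - s) * B)) ⬝ᵥ ud (j + s))
      + (∑ t ∈ range L, η t ⬝ᵥ ud (j + (k + t)))
      + (ζ ᵥ* A ^ k) ⬝ᵥ x j = 0 := by
    intro k hk j hj
    have h0 := hker (j + k) hj
    have hst : ζ ⬝ᵥ x (j + k)
        = (ζ ᵥ* A ^ k) ⬝ᵥ x j
          + ∑ s ∈ range k, (ζ ᵥ* (A ^ (k - 1 - s) * B)) ⬝ᵥ ud (j + s) := by
      rw [aux_state A B x ud hx k j, dotProduct_add, Matrix.dotProduct_mulVec,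
        aux_dot_sum]
      congr 1
      apply Finset.sum_congr rfl
      intro s _
      rw [Matrix.dotProduct_mulVec]
    rw [hst] at h0
    simp only [Nat.add_assoc] at h0
    linarith [h0]
  -- the combined row vector
  set e : ℕ → ℕ → Fin m → ℝ :=
    fun k s => if s < k then ζ ᵥ* (A ^ (k - 1 - s) * B) else η (s - k) with he
  set ρ : Fin (L + n) × Fin m → ℝ :=
    fun q => ∑ k ∈ range (n + 1), c k * e k (q.1 : ℕ) q.2 with hρ
  have hinner : ∀ k, k ≤ n → ∀ j : ℕ,
      ∑ s ∈ range (L + n), e k s ⬝ᵥ ud (j + s)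
        = (∑ s ∈ range k, (ζ ᵥ* (A ^ (k - 1 - s) * B)) ⬝ᵥ ud (j + s))
          + (∑ t ∈ range L, η t ⬝ᵥ ud (j + (k + t))) := by
    intro k hk j
    have hsplit : ∑ s ∈ range (L + n), e k s ⬝ᵥ ud (j + s)
        = (∑ s ∈ range k, e k s ⬝ᵥ ud (j + s))
          + ∑ s ∈ Ico k (L + n), e k s ⬝ᵥ ud (j + s) := by
      rw [Finset.range_eq_Ico, ← Finset.sum_Ico_consecutive _ (Nat.zero_le k) (by omega),
        ← Finset.range_eq_Ico]
    rw [hsplit]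
    congr 1
    · apply Finset.sum_congr rfl
      intro s hs
      have : (s : ℕ) < k := Finset.mem_range.mp hs
      simp [he, this]
    · rw [Finset.sum_Ico_eq_sum_range]
      have hzero : ∀ t ∈ range (L + n - k), t ∉ range L → e k (k + t) ⬝ᵥ ud (j + (k + t)) = 0 := by
        intro t _ htL
        have hL : L ≤ t := by simpa using htL
        have : e k (k + t) = 0 := by
          simp only [he]
          rw [if_neg (by omega)]
          have : k + t - k = t := by omega
          rw [this]
          exact hηL t hL
        rw [this, zero_dotProduct]
      rw [← Finset.sum_subset (Finset.range_subset_range.mpr (by omega : L ≤ L + n - k)) hzero]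
      apply Finset.sum_congr rfl
      intro t ht
      have : e k (k + t) = η t := by
        simp only [he]
        rw [if_neg (by omega), Nat.add_sub_cancel_left]
      rw [this]
  have hρH : ρ ᵥ* hankel ud (L + n) (T - (L + n) + 1) = 0 := by
    funext j
    have hj : (j : ℕ) + n ≤ T - L := by
      have := j.isLt
      omega
    show (∑ q : Fin (L + n) × Fin m, ρ q * hankel ud (L + n) (T - (L + n) + 1) q j) = 0
    have hexp : (∑ q : Fin (L + n) × Fin m, ρ q * hankel ud (L + n) (T - (L + n) + 1) q j)
        = ∑ k ∈ range (n + 1), c k * ∑ s ∈ range (L + n), e k s ⬝ᵥ ud ((j : ℕ) + s) := by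
      calc ∑ q : Fin (L + n) × Fin m, ρ q * hankel ud (L + n) (T - (L + n) + 1) q j
          = ∑ s ∈ range (L + n), ∑ i : Fin m,
              (∑ k ∈ range (n + 1), c k * e k s i) * ud (s + (j : ℕ)) i := by
            rw [Fintype.sum_prod_type]
            simp only [hρ, hankel]
            rw [Fin.sum_univ_eq_sum_range (fun s => ∑ i : Fin m,
                (∑ k ∈ range (n + 1), c k * e k s i) * ud (s + (j : ℕ)) i) (L + n)]
        _ = ∑ s ∈ range (L + n), ∑ k ∈ range (n + 1),
              ∑ i : Fin m, c k * (e k s i * ud ((j : ℕ) + s) i) := by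
            apply Finset.sum_congr rfl
            intro s _
            simp only [Finset.sum_mul]
            rw [Finset.sum_comm]
            apply Finset.sum_congr rfl
            intro k _
            apply Finset.sum_congr rfl
            intro i _
            rw [Nat.add_comm s (j : ℕ), mul_assoc]
        _ = ∑ k ∈ range (n + 1), c k * ∑ s ∈ range (L + n), e k s ⬝ᵥ ud ((j : ℕ) + s) := by
            rw [Finset.sum_comm]
            apply Finset.sum_congr rfl
            intro k _
            simp only [dotProduct, Finset.mul_sum]
    rw [hexp]
    have hterm : ∀ k ∈ range (n + 1),
        c k * ∑ s ∈ range (L + n), e k s ⬝ᵥ ud ((j : ℕ) + s)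
          = - (c k * ((ζ ᵥ* A ^ k) ⬝ᵥ x (j : ℕ))) := by
      intro k hk
      have hk' : k ≤ n := by simpa using Nat.lt_succ_iff.mp (Finset.mem_range.mp hk)
      rw [hinner k hk' (j : ℕ)]
      have := hE k hk' (j : ℕ) (by omega)
      have h2 : (∑ s ∈ range k, (ζ ᵥ* (A ^ (k - 1 - s) * B)) ⬝ᵥ ud ((j : ℕ) + s))
          + (∑ t ∈ range L, η t ⬝ᵥ ud ((j : ℕ) + (k + t)))
          = - ((ζ ᵥ* A ^ k) ⬝ᵥ x (j : ℕ)) := by linarith [this]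
      rw [h2]
      ring
    rw [Finset.sum_congr rfl hterm]
    rw [Finset.sum_neg_distrib]
    have h3 : ∑ k ∈ range (n + 1), c k * ((ζ ᵥ* A ^ k) ⬝ᵥ x (j : ℕ)) = 0 := by
      have h4 : ∀ k ∈ range (n + 1), c k * ((ζ ᵥ* A ^ k) ⬝ᵥ x (j : ℕ))
          = ζ ⬝ᵥ (c k • ((A ^ k).mulVec (x (j : ℕ)))) := by
        intro k _
        rw [dotProduct_smul, ← Matrix.dotProduct_mulVec]
        simp [smul_eq_mul]
      rw [Finset.sum_congr rfl h4, ← aux_dot_sum]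
      have h5 : ∑ k ∈ range (n + 1), c k • ((A ^ k).mulVec (x (j : ℕ)))
          = (∑ k ∈ range (n + 1), c k • A ^ k).mulVec (x (j : ℕ)) := by
        rw [aux_sum_smul_mulVec]
      rw [h5, hCH, Matrix.zero_mulVec, dotProduct_zero]
    rw [h3]
    ring
  -- rho = 0
  have hρ0 : ρ = 0 := by
    apply aux_vecMul_eq_zero (hankel ud (L + n) (T - (L + n) + 1)) _ ρ hρH
    rw [hpe]
    simp
  have hρs : ∀ s : ℕ, s < L + n → ∀ i : Fin m,
      ∑ k ∈ range (n + 1), c k * (if s < k then (ζ ᵥ* (A ^ (k - 1 - s) * B)) i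
        else η (s - k) i) = 0 := by
    intro s hs i
    have h0 := congrFun hρ0 (⟨⟨s, hs⟩, i⟩ : Fin (L + n) × Fin m)
    simpa [hρ, he, apply_ite (fun f : Fin m → ℝ => f i)] using h0
  -- eta = 0
  have hstep : ∀ t, t < L → (∀ t', t < t' → t' < L → η t' = 0) → η t = 0 := by
    intro t ht hIH
    funext i
    have h0 := hρs (n + t) (by omega) i
    rw [Finset.sum_range_succ] at h0
    have hz : ∀ k ∈ range n, c k * (if n + t < k
        then (ζ ᵥ* (A ^ (k - 1 - (n + t)) * B)) i else η (n + t - k) i) = 0 := by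
      intro k hk
      have hkn : k < n := Finset.mem_range.mp hk
      rw [if_neg (by omega)]
      have hzt : η (n + t - k) = 0 := by
        by_cases hc2 : L ≤ n + t - k
        · exact hηL _ hc2
        · exact hIH (n + t - k) (by omega) (by omega)
      rw [hzt]
      simp
    rw [Finset.sum_eq_zero hz, zero_add, if_neg (by omega)] at h0
    have hnt : n + t - n = t := by omega
    rw [hnt, hcn, one_mul] at h0
    exact h0
  have hη0 : ∀ t, η t = 0 := by
    have key : ∀ d t, t < L → L ≤ t + d + 1 → η t = 0 := by
      intro d
      induction d with
      | zero =>
        intro t ht hle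
        exact hstep t ht (fun t' h1 h2 => absurd h2 (by omega))
      | succ d ih =>
        intro t ht hle
        exact hstep t ht (fun t' h1 h2 => ih t' h2 (by omega))
    intro t
    by_cases ht : t < L
    · exact key L t ht (by omega)
    · exact hηL t (by omega)
  -- zeta B terms = 0
  have hζB : ∀ q, q < n → ζ ᵥ* (A ^ q * B) = 0 := by
    intro q
    induction q using Nat.strong_induction_on with
    | _ q ih =>
      intro hq
      funext i
      have h0 := hρs (n - 1 - q) (by omega) i
      rw [Finset.sum_range_succ] at h0
      have hz : ∀ k ∈ range n, c k * (if n - 1 - q < k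
          then (ζ ᵥ* (A ^ (k - 1 - (n - 1 - q)) * B)) i else η (n - 1 - q - k) i) = 0 := by
        intro k hk
        have hkn : k < n := Finset.mem_range.mp hk
        by_cases hsk : n - 1 - q < k
        · rw [if_pos hsk]
          have hlt : k - 1 - (n - 1 - q) < q := by omega
          rw [ih (k - 1 - (n - 1 - q)) hlt (by omega)]
          simp
        · rw [if_neg hsk, hη0]
          simp
      rw [Finset.sum_eq_zero hz, zero_add, if_pos (by omega)] at h0
      have hexp2 : n - 1 - (n - 1 - q) = q := by omega
      rw [hexp2, hcn, one_mul] at h0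
      simpa using h0
  -- zeta = 0
  have hζ : ζ = 0 := by
    have hcv : ζ ᵥ* ctrbMat A B = 0 := by
      funext q
      show ∑ i2, ζ i2 * ctrbMat A B i2 q = 0
      have : ∀ i2, ζ i2 * ctrbMat A B i2 q = ζ i2 * (A ^ (q.1 : ℕ) * B) i2 q.2 := by
        intro i2; rfl
      simp only [this]
      have h6 := congrFun (hζB (q.1 : ℕ) q.1.isLt) q.2
      simpa [Matrix.vecMul, dotProduct] using h6
    apply aux_vecMul_eq_zero (ctrbMat A B) _ ζ hcv
    rw [hctrb]
    simp
  exact ⟨hη0, hζ⟩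

lemma aux_traj {n m p T L : ℕ}
    (A : Matrix (Fin n) (Fin n) ℝ) (B : Matrix (Fin n) (Fin m) ℝ)
    (C : Matrix (Fin p) (Fin n) ℝ) (D : Matrix (Fin p) (Fin m) ℝ)
    (x : ℕ → Fin n → ℝ) (ud : ℕ → Fin m → ℝ) (yd : ℕ → Fin p → ℝ)
    (hx : ∀ t, x (t + 1) = A.mulVec (x t) + B.mulVec (ud t))
    (hy : ∀ t, yd t = C.mulVec (x t) + D.mulVec (ud t))
    (g : Fin (T - L + 1) → ℝ) (t : ℕ) :
    ((∑ j : Fin (T - L + 1), g j • x ((j : ℕ) + (t + 1)))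
        = A.mulVec (∑ j : Fin (T - L + 1), g j • x ((j : ℕ) + t))
          + B.mulVec (∑ j : Fin (T - L + 1), g j • ud ((j : ℕ) + t)))
    ∧ ((∑ j : Fin (T - L + 1), g j • yd ((j : ℕ) + t))
        = C.mulVec (∑ j : Fin (T - L + 1), g j • x ((j : ℕ) + t))
          + D.mulVec (∑ j : Fin (T - L + 1), g j • ud ((j : ℕ) + t))) := by
  constructor
  · calc ∑ j : Fin (T - L + 1), g j • x ((j : ℕ) + (t + 1))
        = ∑ j : Fin (T - L + 1),
            g j • (A.mulVec (x ((j : ℕ) + t)) + B.mulVec (ud ((j : ℕ) + t))) := by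
          apply Finset.sum_congr rfl
          intro j _
          rw [show (j : ℕ) + (t + 1) = ((j : ℕ) + t) + 1 by ring, hx]
      _ = A.mulVec (∑ j : Fin (T - L + 1), g j • x ((j : ℕ) + t))
          + B.mulVec (∑ j : Fin (T - L + 1), g j • ud ((j : ℕ) + t)) := by
          rw [aux_mulVec_sum, aux_mulVec_sum, ← Finset.sum_add_distrib]
          apply Finset.sum_congr rfl
          intro j _
          rw [smul_add]
  · calc ∑ j : Fin (T - L + 1), g j • yd ((j : ℕ) + t)
        = ∑ j : Fin (T - L + 1),
            g j • (C.mulVec (x ((j : ℕ) + t)) + D.mulVec (ud ((j : ℕ) + t))) := by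
          apply Finset.sum_congr rfl
          intro j _
          rw [hy]
      _ = C.mulVec (∑ j : Fin (T - L + 1), g j • x ((j : ℕ) + t))
          + D.mulVec (∑ j : Fin (T - L + 1), g j • ud ((j : ℕ) + t)) := by
          rw [aux_mulVec_sum, aux_mulVec_sum, ← Finset.sum_add_distrib]
          apply Finset.sum_congr rfl
          intro j _
          rw [smul_add]

theorem stmt8' {n m p T L : ℕ}
    (A : Matrix (Fin n) (Fin n) ℝ) (B : Matrix (Fin n) (Fin m) ℝ)
    (C : Matrix (Fin p) (Fin n) ℝ) (D : Matrix (Fin p) (Fin m) ℝ)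
    (hctrb : (ctrbMat A B).rank = n)
    (x : ℕ → Fin n → ℝ) (ud : ℕ → Fin m → ℝ) (yd : ℕ → Fin p → ℝ)
    (hx : ∀ t, x (t + 1) = A.mulVec (x t) + B.mulVec (ud t))
    (hy : ∀ t, yd t = C.mulVec (x t) + D.mulVec (ud t))
    (hpe : (hankel ud (L + n) (T - (L + n) + 1)).rank = (L + n) * m)
    (hLT : L + n ≤ T) :
    (∀ (uu : ℕ → Fin m → ℝ) (x0 : Fin n → ℝ),
      ∃ g : Fin (T - L + 1) → ℝ,
        (∀ t < L, (∑ j : Fin (T - L + 1), g j • ud ((j : ℕ) + t)) = uu t) ∧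
        ∃ xx : ℕ → Fin n → ℝ, xx 0 = x0 ∧
          (∀ t < L, xx (t + 1) = A.mulVec (xx t) + B.mulVec (uu t)) ∧
          (∀ t < L, (∑ j : Fin (T - L + 1), g j • yd ((j : ℕ) + t)) =
            C.mulVec (xx t) + D.mulVec (uu t))) ∧
    (∀ g : Fin (T - L + 1) → ℝ,
      ∃ xx : ℕ → Fin n → ℝ,
        ∀ t < L,
          xx (t + 1) = A.mulVec (xx t)
              + B.mulVec (∑ j : Fin (T - L + 1), g j • ud ((j : ℕ) + t)) ∧
          (∑ j : Fin (T - L + 1), g j • yd ((j : ℕ) + t)) =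
            C.mulVec (xx t)
              + D.mulVec (∑ j : Fin (T - L + 1), g j • ud ((j : ℕ) + t))) := by
  classical
  constructor
  · -- surjectivity part
    set M : Matrix ((Fin L × Fin m) ⊕ Fin n) (Fin (T - L + 1)) ℝ :=
      fun r j => Sum.elim (fun (q : Fin L × Fin m) => ud ((j : ℕ) + (q.1 : ℕ)) q.2)
        (fun i => x (j : ℕ) i) r with hM
    have hsurj : Function.Surjective M.mulVec := by
      apply aux_mulVec_surjective
      intro ξ hξ
      set η : ℕ → Fin m → ℝ :=
        fun t i => if h : t < L then ξ (Sum.inl (⟨t, h⟩, i)) else 0 with hη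
      set ζ : Fin n → ℝ := fun i => ξ (Sum.inr i) with hζd
      have hηL : ∀ t, L ≤ t → η t = 0 := by
        intro t ht
        funext i
        show (if h : t < L then ξ (Sum.inl (⟨t, h⟩, i)) else 0) = 0
        rw [dif_neg (by omega)]
      have hker : ∀ j, j ≤ T - L →
          (∑ t ∈ range L, η t ⬝ᵥ ud (j + t)) + ζ ⬝ᵥ x j = 0 := by
        intro j hjle
        have h0 := congrFun hξ (⟨j, by omega⟩ : Fin (T - L + 1))
        have h1 : (ξ ᵥ* M) (⟨j, by omega⟩ : Fin (T - L + 1))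
            = (∑ t ∈ range L, η t ⬝ᵥ ud (j + t)) + ζ ⬝ᵥ x j := by
          show (∑ r, ξ r * M r (⟨j, by omega⟩ : Fin (T - L + 1))) = _
          rw [Fintype.sum_sum_type]
          apply congrArg₂ (· + ·)
          · rw [← Fin.sum_univ_eq_sum_range (fun t => η t ⬝ᵥ ud (j + t)) L,
              Fintype.sum_prod_type]
            apply Finset.sum_congr rfl
            intro t _
            simp [hη, hM, dotProduct, t.isLt]
          · rfl
        rw [h0] at h1
        exact h1.symm
      obtain ⟨hη0, hζ0⟩ := aux_core A B hctrb x ud hx hpe hLT η ζ hηL hker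
      funext r
      cases r with
      | inl q =>
        have h2 := congrFun (hη0 (q.1 : ℕ)) q.2
        simpa [hη, q.1.isLt] using h2
      | inr i => exact congrFun hζ0 i
    intro uu x0
    obtain ⟨g, hg⟩ := hsurj (Sum.elim (fun q : Fin L × Fin m => uu (q.1 : ℕ) q.2) x0)
    have hu : ∀ t, t < L → (∑ j : Fin (T - L + 1), g j • ud ((j : ℕ) + t)) = uu t := by
      intro t ht
      funext i
      have h0 := congrFun hg (Sum.inl (⟨⟨t, ht⟩, i⟩ : Fin L × Fin m))
      simp only [Matrix.mulVec, dotProduct, hM, Sum.elim_inl] at h0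
      rw [Finset.sum_apply]
      simpa [mul_comm] using h0
    have hx0 : (∑ j : Fin (T - L + 1), g j • x ((j : ℕ) + 0)) = x0 := by
      funext i
      have h0 := congrFun hg (Sum.inr i)
      simp only [Matrix.mulVec, dotProduct, hM, Sum.elim_inr] at h0
      rw [Finset.sum_apply]
      simpa [mul_comm] using h0
    refine ⟨g, fun t ht => hu t ht,
      fun t => ∑ j : Fin (T - L + 1), g j • x ((j : ℕ) + t), hx0, ?_, ?_⟩
    · intro t ht
      have h3 := (aux_traj A B C D x ud yd hx hy g t).1
      rw [hu t ht] at h3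
      exact h3
    · intro t ht
      have h3 := (aux_traj A B C D x ud yd hx hy g t).2
      rw [hu t ht] at h3
      exact h3
  · intro g
    refine ⟨fun t => ∑ j : Fin (T - L + 1), g j • x ((j : ℕ) + t), fun t _ => ?_⟩
    exact ⟨(aux_traj A B C D x ud yd hx hy g t).1, (aux_traj A B C D x ud yd hx hy g t).2⟩

/-- Fundamental Lemma, state-space version: if `(A,B,C,D)` is
controllable and observable with state dimension `n`, `u^d` of length `T` is
persistently exciting of order `L + n`, and `y^d` is the corresponding output,
then the column span of `H_L(col(u^d, y^d))` is exactly the set of length-`L`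
trajectories: every pair (input sequence, initial state) is attained by some
`g`, and conversely every `g` yields a trajectory. -/
theorem stmt8 {n m p T L : ℕ}
    (A : Matrix (Fin n) (Fin n) ℝ) (B : Matrix (Fin n) (Fin m) ℝ)
    (C : Matrix (Fin p) (Fin n) ℝ) (D : Matrix (Fin p) (Fin m) ℝ)
    (hctrb : (ctrbMat A B).rank = n)
    (hobs : (obsMat A C n).rank = n)
    (x : ℕ → Fin n → ℝ) (ud : ℕ → Fin m → ℝ) (yd : ℕ → Fin p → ℝ)
    (hx : ∀ t, x (t + 1) = A.mulVec (x t) + B.mulVec (ud t))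
    (hy : ∀ t, yd t = C.mulVec (x t) + D.mulVec (ud t))
    (hpe : (hankel ud (L + n) (T - (L + n) + 1)).rank = (L + n) * m)
    (hLT : L + n ≤ T) :
    (∀ (uu : ℕ → Fin m → ℝ) (x0 : Fin n → ℝ),
      ∃ g : Fin (T - L + 1) → ℝ,
        (∀ t < L, (∑ j : Fin (T - L + 1), g j • ud ((j : ℕ) + t)) = uu t) ∧
        ∃ xx : ℕ → Fin n → ℝ, xx 0 = x0 ∧
          (∀ t < L, xx (t + 1) = A.mulVec (xx t) + B.mulVec (uu t)) ∧
          (∀ t < L, (∑ j : Fin (T - L + 1), g j • yd ((j : ℕ) + t)) =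
            C.mulVec (xx t) + D.mulVec (uu t))) ∧
    (∀ g : Fin (T - L + 1) → ℝ,
      ∃ xx : ℕ → Fin n → ℝ,
        ∀ t < L,
          xx (t + 1) = A.mulVec (xx t)
              + B.mulVec (∑ j : Fin (T - L + 1), g j • ud ((j : ℕ) + t)) ∧
          (∑ j : Fin (T - L + 1), g j • yd ((j : ℕ) + t)) =
            C.mulVec (xx t)
              + D.mulVec (∑ j : Fin (T - L + 1), g j • ud ((j : ℕ) + t))) := stmt8' A B C D hctrb x ud yd hx hy hpe hLT
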